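/- Let σ be an edge-coloring of an ordered complete graph that is a (3,2)-coloring, and let x1 < x2 < x3 < x4 be elements of {0,1}^n with γ_i = γ(x_i, x_{i+1}) satisfying γ_1 < γ_2 and γ_3 < γ_2 and γ_4 < γ_3 (where γ_4 = γ(x_4, x_5) for a fifth vertex x_5 > x_4). Then among the triples x_2x_3x_4, x_2x_3x_5, x_2x_4x_5, x_3x_4x_5, the coloring χ(uvw) = (σ(γ(u,v)γ(v,w)), δ(u,v,w)) takes at least two distinct values, each with δ-coordinate −1. -/
import Mathlib


/-- Binary order on `{0,1}^n` (coordinate 0 most significant). -/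
def binLT {n : ℕ} (x y : Fin n → Bool) : Prop :=
  ∃ i : Fin n, x i = false ∧ y i = true ∧ ∀ j < i, x j = y j

/-- `gamma x y` : the first coordinate where `x` and `y` differ (as a natural number). -/
noncomputable def gamma {n : ℕ} (x y : Fin n → Bool) : ℕ :=
  sInf {i | ∃ h : i < n, x ⟨i, h⟩ ≠ y ⟨i, h⟩}

/-- The stepped-up coloring `χ(uvw) = (σ(γ(u,v) γ(v,w)), δ(u,v,w))` for `u < v < w`. -/
noncomputable def chi {n : ℕ} {C : Type*} (σ : ℕ → ℕ → C) (u v w : Fin n → Bool) :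
    C × ℤ :=
  (σ (gamma u v) (gamma v w), if gamma u v < gamma v w then 1 else -1)

lemma gamma_agree {n : ℕ} (x y : Fin n → Bool) (j : Fin n) (hj : (j : ℕ) < gamma x y) :
    x j = y j := by
  by_contra h
  have hm : (j : ℕ) ∈ {i | ∃ h : i < n, x ⟨i, h⟩ ≠ y ⟨i, h⟩} := ⟨j.2, by simpa using h⟩
  exact absurd (Nat.sInf_le hm) (not_le.mpr hj)

lemma gamma_mem {n : ℕ} (x y : Fin n → Bool) (h : binLT x y) :
    ∃ h' : gamma x y < n, x ⟨gamma x y, h'⟩ ≠ y ⟨gamma x y, h'⟩ := by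
  obtain ⟨i, hx, hy, -⟩ := h
  have hne : {i | ∃ h : i < n, x ⟨i, h⟩ ≠ y ⟨i, h⟩}.Nonempty :=
    ⟨i, i.2, by simp [hx, hy]⟩
  exact Nat.sInf_mem hne

lemma gamma_trans_lt {n : ℕ} (x y z : Fin n → Bool) (hyz : binLT y z)
    (h : gamma y z < gamma x y) : gamma x z = gamma y z := by
  obtain ⟨hn, hne⟩ := gamma_mem y z hyz
  have hmem : gamma y z ∈ {i | ∃ h : i < n, x ⟨i, h⟩ ≠ z ⟨i, h⟩} := by
    refine ⟨hn, ?_⟩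
    have hxy := gamma_agree x y ⟨gamma y z, hn⟩ h
    intro hc; exact hne (hxy ▸ hc)
  have hle : gamma x z ≤ gamma y z := Nat.sInf_le hmem
  rcases lt_or_eq_of_le hle with hlt | heq
  · exfalso
    have hmem' := Nat.sInf_mem (⟨_, hmem⟩ :
      Set.Nonempty {i | ∃ h : i < n, x ⟨i, h⟩ ≠ z ⟨i, h⟩})
    obtain ⟨hn', hne'⟩ := hmem'
    have h1 := gamma_agree x y ⟨gamma x z, hn'⟩ (lt_trans hlt h)
    have h2 := gamma_agree y z ⟨gamma x z, hn'⟩ hlt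
    exact hne' (h1.trans h2)
  · exact heq

theorem stmt_13 {n : ℕ} {C : Type*} [DecidableEq C] (σ : ℕ → ℕ → C)
    (hsym : ∀ a b, σ a b = σ b a)
    (h32 : ∀ a b c : ℕ, a < b → b < c → ¬(σ a b = σ a c ∧ σ a c = σ b c))
    (x₁ x₂ x₃ x₄ x₅ : Fin n → Bool)
    (h12 : binLT x₁ x₂) (h23 : binLT x₂ x₃) (h34 : binLT x₃ x₄) (h45 : binLT x₄ x₅)
    (hg12 : gamma x₁ x₂ < gamma x₂ x₃)
    (hg32 : gamma x₃ x₄ < gamma x₂ x₃)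
    (hg43 : gamma x₄ x₅ < gamma x₃ x₄) :
    ∃ c₁ c₂ : C × ℤ,
      c₁ ∈ ({chi σ x₂ x₃ x₄, chi σ x₂ x₃ x₅, chi σ x₂ x₄ x₅, chi σ x₃ x₄ x₅} :
        Finset (C × ℤ)) ∧
      c₂ ∈ ({chi σ x₂ x₃ x₄, chi σ x₂ x₃ x₅, chi σ x₂ x₄ x₅, chi σ x₃ x₄ x₅} :
        Finset (C × ℤ)) ∧
      c₁ ≠ c₂ ∧ c₁.2 = -1 ∧ c₂.2 = -1 := by
  set a := gamma x₄ x₅ with ha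
  set b := gamma x₃ x₄ with hb
  set c := gamma x₂ x₃ with hc
  have g35 : gamma x₃ x₅ = a := gamma_trans_lt x₃ x₄ x₅ h45 hg43
  have g24 : gamma x₂ x₄ = b := gamma_trans_lt x₂ x₃ x₄ h34 hg32
  have e1 : chi σ x₂ x₃ x₄ = (σ c b, -1) := by
    simp [chi, ← hb, ← hc, not_lt.mpr (le_of_lt hg32)]
  have e2 : chi σ x₂ x₃ x₅ = (σ c a, -1) := by
    simp [chi, g35, ← hc, not_lt.mpr (le_of_lt (lt_trans hg43 hg32))]
  have e3 : chi σ x₂ x₄ x₅ = (σ b a, -1) := by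
    simp [chi, g24, ← ha, not_lt.mpr (le_of_lt hg43)]
  have hne := h32 a b c hg43 hg32
  rw [hsym a b, hsym a c, hsym b c] at hne
  by_cases hcase : σ c a = σ c b
  · -- then σ b a ≠ σ c a
    have hba : σ b a ≠ σ c a := fun h => hne ⟨h, hcase⟩
    refine ⟨(σ c a, -1), (σ b a, -1), ?_, ?_, ?_, rfl, rfl⟩
    · simp [e2]
    · simp [e3]
    · simp [Prod.ext_iff]; exact fun h => hba h.symm
  · refine ⟨(σ c b, -1), (σ c a, -1), ?_, ?_, ?_, rfl, rfl⟩
    · simp [e1]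
    · simp [e2]
    · simp [Prod.ext_iff]; exact fun h => hcase h.symm
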